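/- Let n ≥ 2 be an integer, let S ⊆ {1,…,n} with |S| = t ≤ n−1, let r = n − t, and let β > 0. Define the symmetric real n×n matrix J by J_{ij} = (β/r)·(1 − 1[i∈S]·1[j∈S]), i.e., J = (β/r)·(𝟙𝟙ᵀ − 𝟙_S 𝟙_Sᵀ) where 𝟙 is the all-ones vector and 𝟙_S is the indicator vector of S. Then the eigenvalues of J satisfy β ≤ λ_max(J) − λ_min(J) ≤ β·(1 + 2t/r). -/

import Mathlib

set_option maxHeartbeats 1000000 in
/-- For `n ≥ 2`, `S ⊆ {1,…,n}` with `|S| = t ≤ n-1`, `r = n - t`,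
and `β > 0`, the symmetric matrix `J = (β/r)·(𝟙𝟙ᵀ - 𝟙_S 𝟙_Sᵀ)` has spectral width
`λ_max(J) - λ_min(J)` between `β` and `β·(1 + 2t/r)`. -/
theorem stmt12 {n : ℕ} (hn : 2 ≤ n) (S : Finset (Fin n)) (t : ℕ)
    (ht : S.card = t) (htn : t ≤ n - 1) (β : ℝ) (hβ : 0 < β)
    (J : Matrix (Fin n) (Fin n) ℝ)
    (hJdef : ∀ i j, J i j =
      (β / ((n - t : ℕ) : ℝ)) *
        (1 - (if i ∈ S then (1 : ℝ) else 0) * (if j ∈ S then (1 : ℝ) else 0)))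
    (hJ : J.IsHermitian) :
    β ≤ (⨆ i, hJ.eigenvalues i) - (⨅ i, hJ.eigenvalues i) ∧
    (⨆ i, hJ.eigenvalues i) - (⨅ i, hJ.eigenvalues i) ≤
      β * (1 + 2 * (t : ℝ) / ((n - t : ℕ) : ℝ)) := by
  classical
  have htn' : t ≤ n := le_trans htn (Nat.sub_le n 1)
  have hr1 : 1 ≤ n - t := by omega
  set r : ℝ := ((n - t : ℕ) : ℝ) with hrdef
  have hrpos : (0 : ℝ) < r := by
    simp only [hrdef]; exact_mod_cast Nat.lt_of_lt_of_le Nat.zero_lt_one hr1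
  have hrne : r ≠ 0 := ne_of_gt hrpos
  have hnr : (n : ℝ) = (t : ℝ) + r := by
    simp only [hrdef]
    push_cast [Nat.cast_sub htn']
    ring
  have htnn : (0 : ℝ) ≤ (t : ℝ) := Nat.cast_nonneg t
  -- the square root quantity
  set s : ℝ := Real.sqrt (1 + 4 * (t : ℝ) / r) with hsdef
  have hs1 : 1 ≤ s := by
    have h4 : (0:ℝ) ≤ 4 * (t : ℝ) / r := by positivity
    have := Real.sqrt_le_sqrt (show (1:ℝ) ≤ 1 + 4 * (t : ℝ) / r by linarith)
    rwa [Real.sqrt_one] at this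
  have hs_sq : s ^ 2 = 1 + 4 * (t : ℝ) / r := by
    rw [hsdef, Real.sq_sqrt]; positivity
  have hrs : r * s ^ 2 = r + 4 * (t : ℝ) := by
    rw [hs_sq]; field_simp
  set lo : ℝ := β * (1 - s) / 2 with hlodef
  set hi : ℝ := β * (1 + s) / 2 with hhidef
  have hlo_nonpos : lo ≤ 0 := by
    rw [hlodef]; nlinarith
  have hhi_ge : β ≤ hi := by
    rw [hhidef]; nlinarith
  have hcard : ∑ k : Fin n, (if k ∈ S then (1:ℝ) else 0) = (t : ℝ) := by
    simp [Finset.sum_ite_mem, Finset.univ_inter, ht]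
  -- every eigenvalue is 0, lo, or hi
  have key : ∀ i, hJ.eigenvalues i = 0 ∨ hJ.eigenvalues i = lo ∨ hJ.eigenvalues i = hi := by
    intro i
    set lam : ℝ := hJ.eigenvalues i with hlam
    by_cases hlz : lam = 0
    · exact Or.inl hlz
    right
    set u : Fin n → ℝ := ⇑(hJ.eigenvectorBasis i) with hudef
    have hu : J.mulVec u = lam • u := hJ.mulVec_eigenvectorBasis i
    have hune : u ≠ 0 := by
      intro h
      exact (hJ.eigenvectorBasis.orthonormal.ne_zero i) (by ext j; exact congrFun h j)
    set A : ℝ := ∑ j, u j with hAdef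
    set B : ℝ := ∑ j ∈ S, u j with hBdef
    have hpoint : ∀ k, lam * u k = (β / r) * (A - (if k ∈ S then (1:ℝ) else 0) * B) := by
      intro k
      have h1 : J.mulVec u k = lam * u k := by rw [hu]; rfl
      rw [← h1]
      unfold Matrix.mulVec dotProduct
      have heach : ∀ j, J k j * u j =
          (β / r) * (u j - (if k ∈ S then (1:ℝ) else 0) * ((if j ∈ S then (1:ℝ) else 0) * u j)) := by
        intro j; rw [hJdef k j]; ring
      rw [Finset.sum_congr rfl (fun j _ => heach j), ← Finset.mul_sum, Finset.sum_sub_distrib,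
        ← Finset.mul_sum]
      have hsum : ∑ j, (if j ∈ S then (1:ℝ) else 0) * u j = B := by
        rw [hBdef]
        simp [ite_mul, Finset.sum_ite_mem, Finset.univ_inter]
      rw [hsum]
    -- sum over all indices
    have eq1 : r * (lam * A) = β * ((t : ℝ) * A + r * A - (t : ℝ) * B) := by
      have h1 : ∑ k, lam * u k = lam * A := by rw [hAdef, Finset.mul_sum]
      have h2 : ∑ k, (β / r) * (A - (if k ∈ S then (1:ℝ) else 0) * B) =
          (β / r) * ((n : ℝ) * A - (t : ℝ) * B) := by
        rw [← Finset.mul_sum]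
        congr 1
        rw [Finset.sum_sub_distrib]
        have e1 : ∑ _k : Fin n, A = (n : ℝ) * A := by
          simp [Finset.sum_const, Finset.card_univ, nsmul_eq_mul]
        have e2 : ∑ k : Fin n, (if k ∈ S then (1:ℝ) else 0) * B = (t : ℝ) * B := by
          rw [← Finset.sum_mul, hcard]
        rw [e1, e2]
      have h3 := (Finset.sum_congr rfl (fun k _ => hpoint k)).trans h2
      rw [h1, hnr] at h3
      field_simp at h3
      linear_combination h3
    -- sum over S
    have eq2 : r * (lam * B) = β * ((t : ℝ) * A - (t : ℝ) * B) := by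
      have h1 : ∑ k ∈ S, lam * u k = lam * B := by rw [hBdef, Finset.mul_sum]
      have h2 : ∑ k ∈ S, (β / r) * (A - (if k ∈ S then (1:ℝ) else 0) * B) =
          (β / r) * ((t : ℝ) * A - (t : ℝ) * B) := by
        rw [Finset.sum_congr rfl (fun k hk => by rw [if_pos hk])]
        rw [Finset.sum_const, ht, nsmul_eq_mul]
        ring
      have h3 := (Finset.sum_congr rfl (fun k _ => hpoint k)).trans h2
      rw [h1] at h3
      field_simp at h3
      linear_combination h3
    -- the quadratic
    by_cases hq : r * lam ^ 2 - r * β * lam - β ^ 2 * (t : ℝ) = 0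
    · -- lam is a root: (lam - lo)(lam - hi) = 0
      have h0 : r * ((lam - lo) * (lam - hi)) = 0 := by
        rw [hlodef, hhidef]
        linear_combination hq - (β ^ 2 / 4) * hrs
      have hfac : (lam - lo) * (lam - hi) = 0 :=
        (mul_eq_zero.mp h0).resolve_left hrne
      rcases mul_eq_zero.mp hfac with h | h
      · exact Or.inl (by linarith)
      · exact Or.inr (by linarith)
    · -- not a root: then A = B = 0, so u = 0, contradiction
      exfalso
      have hA0 : (r * (r * lam ^ 2 - r * β * lam - β ^ 2 * (t : ℝ))) * A = 0 := by
        linear_combination (r * lam + β * (t : ℝ)) * eq1 - β * (t : ℝ) * eq2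
      have hB0 : (r * (r * lam ^ 2 - r * β * lam - β ^ 2 * (t : ℝ))) * B = 0 := by
        linear_combination β * (t : ℝ) * eq1 + (r * lam - β * ((t : ℝ) + r)) * eq2
      have hDne : r * (r * lam ^ 2 - r * β * lam - β ^ 2 * (t : ℝ)) ≠ 0 :=
        mul_ne_zero hrne hq
      have hA : A = 0 := (mul_eq_zero.mp hA0).resolve_left hDne
      have hB : B = 0 := (mul_eq_zero.mp hB0).resolve_left hDne
      apply hune
      funext k
      have hk := hpoint k
      rw [hA, hB] at hk
      have hz : lam * u k = 0 := by rw [hk]; ring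
      exact (mul_eq_zero.mp hz).resolve_left hlz
  -- bounds on each eigenvalue
  have hbound : ∀ i, lo ≤ hJ.eigenvalues i ∧ hJ.eigenvalues i ≤ hi := by
    intro i
    have hlohi : lo ≤ hi := by linarith
    rcases key i with h | h | h <;> rw [h]
    · exact ⟨hlo_nonpos, by linarith⟩
    · exact ⟨le_refl _, hlohi⟩
    · exact ⟨hlohi, le_refl _⟩
  -- trace = sum of eigenvalues
  have htr : ∑ i, hJ.eigenvalues i = β := by
    have h1 : Matrix.trace J = ∑ i, hJ.eigenvalues i := by
      conv_lhs => rw [hJ.spectral_theorem]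
      rw [Unitary.conjStarAlgAut_apply]
      rw [Matrix.trace_mul_cycle]
      rw [show (star (hJ.eigenvectorUnitary : Matrix (Fin n) (Fin n) ℝ)) *
          (hJ.eigenvectorUnitary : Matrix (Fin n) (Fin n) ℝ) = 1 from
        Matrix.mem_unitaryGroup_iff'.mp (hJ.eigenvectorUnitary).2]
      rw [one_mul, Matrix.trace_diagonal]
      simp
    have h2 : Matrix.trace J = β := by
      have htr2 : Matrix.trace J = ∑ i, J i i := rfl
      rw [htr2]
      have heach : ∀ i : Fin n, J i i = (β / r) * (1 - (if i ∈ S then (1:ℝ) else 0)) := by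
        intro i; rw [hJdef i i]
        by_cases h : i ∈ S <;> simp [h]
      rw [Finset.sum_congr rfl (fun i _ => heach i), ← Finset.mul_sum, Finset.sum_sub_distrib,
        hcard]
      have e1 : ∑ _k : Fin n, (1:ℝ) = (n : ℝ) := by
        simp [Finset.sum_const, Finset.card_univ]
      rw [e1, hnr]
      field_simp
      ring
    rw [← h1, h2]
  have hne : Nonempty (Fin n) := ⟨⟨0, by omega⟩⟩
  have hbddA : BddAbove (Set.range hJ.eigenvalues) := Set.Finite.bddAbove (Set.finite_range _)
  have hbddB : BddBelow (Set.range hJ.eigenvalues) := Set.Finite.bddBelow (Set.finite_range _)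
  -- sup ≥ β
  have hsup_ge : β ≤ ⨆ i, hJ.eigenvalues i := by
    by_contra h
    push_neg at h
    have hall : ∀ i, hJ.eigenvalues i ≤ 0 := by
      intro i
      rcases key i with hh | hh | hh
      · exact le_of_eq hh
      · exact hh.le.trans hlo_nonpos
      · exfalso
        have := le_ciSup hbddA i
        rw [hh] at this
        linarith
    have hsum : ∑ i, hJ.eigenvalues i ≤ 0 := Finset.sum_nonpos (fun i _ => hall i)
    rw [htr] at hsum
    linarith
  -- inf ≤ 0
  have hinf_le : (⨅ i, hJ.eigenvalues i) ≤ 0 := by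
    by_contra h
    push_neg at h
    have hall : ∀ i, hJ.eigenvalues i = hi := by
      intro i
      have hpos : 0 < hJ.eigenvalues i := lt_of_lt_of_le h (ciInf_le hbddB i)
      rcases key i with hh | hh | hh
      · rw [hh] at hpos; linarith
      · rw [hh] at hpos; linarith
      · exact hh
    have hsum : ∑ i, hJ.eigenvalues i = (n : ℝ) * hi := by
      rw [Finset.sum_congr rfl (fun i _ => hall i), Finset.sum_const, Finset.card_univ,
        Fintype.card_fin, nsmul_eq_mul]
    rw [htr] at hsum
    have h2 : (2 : ℝ) ≤ (n : ℝ) := by exact_mod_cast hn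
    nlinarith
  have hsup_le : (⨆ i, hJ.eigenvalues i) ≤ hi := ciSup_le (fun i => (hbound i).2)
  have hinf_ge : lo ≤ ⨅ i, hJ.eigenvalues i := le_ciInf (fun i => (hbound i).1)
  constructor
  · linarith
  · have h1 : (⨆ i, hJ.eigenvalues i) - (⨅ i, hJ.eigenvalues i) ≤ hi - lo := by linarith
    have h2 : hi - lo = β * s := by rw [hlodef, hhidef]; ring
    have h3 : s ≤ 1 + 2 * (t : ℝ) / r := by
      rw [hsdef]
      rw [show (1 : ℝ) + 2 * (t : ℝ) / r = Real.sqrt ((1 + 2 * (t : ℝ) / r) ^ 2) from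
        (Real.sqrt_sq (by positivity)).symm]
      apply Real.sqrt_le_sqrt
      have hsq : (0:ℝ) ≤ (2 * (t : ℝ) / r) ^ 2 := sq_nonneg _
      have hexp : (1 + 2 * (t : ℝ) / r) ^ 2 = 1 + 4 * (t : ℝ) / r + (2 * (t : ℝ) / r) ^ 2 := by
        ring
      linarith
    calc (⨆ i, hJ.eigenvalues i) - (⨅ i, hJ.eigenvalues i) ≤ hi - lo := h1
      _ = β * s := h2
      _ ≤ β * (1 + 2 * (t : ℝ) / r) := by nlinarith
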